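/- Let θ ∈ (0,1), K ≥ 1, a = 1 − exp(−K/(1−θ)), and ε ∈ (0, min{1−a, 1−θ}). Set U = log(1−ε) / (log(θ·ε·(1−ε−θ)) − log(2K)) and N = 1/U. Then for any z₀ with 1 < z₀ < min{((a+ε/2)/a)^U, (θ+ε)/θ, (1−ε)/θ}, we have (K/θ)·(z₀θ)^N/(1 − z₀θ) + a·z₀^N ≤ a + ε. -/

import Mathlib

/-- Key quantitative bound on the generating function of the return time:
the stated choice of `z₀`, `U`, `N` makes `(K/θ)(z₀θ)^N/(1-z₀θ) + a z₀^N ≤ a + ε`. -/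
theorem stmt_4 (θ K a ε U N z₀ : ℝ)
    (hθ : θ ∈ Set.Ioo (0:ℝ) 1) (hK : 1 ≤ K)
    (ha : a = 1 - Real.exp (-(K / (1 - θ))))
    (hε : ε ∈ Set.Ioo 0 (min (1 - a) (1 - θ)))
    (hU : U = Real.log (1 - ε) / (Real.log (θ * ε * (1 - ε - θ)) - Real.log (2 * K)))
    (hN : N = 1 / U)
    (hz₀ : 1 < z₀)
    (hz₀' : z₀ < min (((a + ε / 2) / a) ^ U) (min ((θ + ε) / θ) ((1 - ε) / θ))) :
    (K / θ) * (z₀ * θ) ^ N / (1 - z₀ * θ) + a * z₀ ^ N ≤ a + ε := by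
  obtain ⟨hθ0, hθ1⟩ := hθ
  obtain ⟨hε0, hε'⟩ := hε
  rw [lt_min_iff] at hε'
  obtain ⟨hεa, hεθ⟩ := hε'
  rw [lt_min_iff, lt_min_iff] at hz₀'
  obtain ⟨hz1, hz2, hz3⟩ := hz₀'
  have hK0 : (0:ℝ) < K := lt_of_lt_of_le one_pos hK
  have hεθ' : 0 < 1 - ε - θ := by linarith
  have hε1 : ε < 1 := by linarith
  have ha0 : 0 < a := by
    have : Real.exp (-(K / (1 - θ))) < 1 := by
      apply Real.exp_lt_one_iff.mpr
      have : 0 < K / (1 - θ) := div_pos hK0 (by linarith)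
      linarith
    rw [ha]; linarith
  have hz0pos : (0:ℝ) < z₀ := lt_trans one_pos hz₀
  have hzθ1 : z₀ * θ < 1 - ε := (lt_div_iff₀ hθ0).mp hz3
  have hzθ2 : z₀ * θ < θ + ε := (lt_div_iff₀ hθ0).mp hz2
  have hzθ0 : 0 < z₀ * θ := mul_pos hz0pos hθ0
  set c := θ * ε * (1 - ε - θ) with hc
  have hc0 : 0 < c := by positivity
  have hc1 : c < 1 := by nlinarith [mul_pos hθ0 hε0, mul_pos (mul_pos hθ0 hε0) hεθ']
  have hlogc : Real.log c < 0 := Real.log_neg hc0 hc1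
  have hlog2K : 0 < Real.log (2 * K) := Real.log_pos (by linarith)
  have hD : Real.log c - Real.log (2 * K) < 0 := by linarith
  have hlog1ε : Real.log (1 - ε) < 0 := Real.log_neg (by linarith) (by linarith)
  have hU0 : 0 < U := by
    rw [hU]
    exact div_pos_of_neg_of_neg hlog1ε hD
  have hN0 : 0 < N := by rw [hN]; positivity
  have hUN : U * N = 1 := by
    rw [hN]; field_simp
  have hNlog : N * Real.log (1 - ε) = Real.log c - Real.log (2 * K) := by
    rw [hN, hU, one_div_div, div_mul_cancel₀ _ (ne_of_lt hlog1ε)]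
  have h1εN : (1 - ε) ^ N = c / (2 * K) := by
    rw [Real.rpow_def_of_pos (by linarith : (0:ℝ) < 1 - ε), mul_comm, hNlog,
      Real.exp_sub, Real.exp_log hc0, Real.exp_log (by linarith)]
  have hzθN : (z₀ * θ) ^ N < c / (2 * K) := by
    rw [← h1εN]
    exact Real.rpow_lt_rpow (le_of_lt hzθ0) hzθ1 hN0
  have hB0 : 0 < (a + ε / 2) / a := by positivity
  have hzN : z₀ ^ N < (a + ε / 2) / a := by
    have h1 : z₀ ^ N < (((a + ε / 2) / a) ^ U) ^ N :=
      Real.rpow_lt_rpow (le_of_lt hz0pos) hz1 hN0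
    have h2 : (((a + ε / 2) / a) ^ U) ^ N = (a + ε / 2) / a := by
      rw [← Real.rpow_mul (le_of_lt hB0), hUN, Real.rpow_one]
    rwa [h2] at h1
  have hterm2 : a * z₀ ^ N ≤ a + ε / 2 := by
    have := mul_lt_mul_of_pos_left hzN ha0
    rw [mul_div_cancel₀ _ (ne_of_gt ha0)] at this
    linarith
  have hterm1 : (K / θ) * (z₀ * θ) ^ N / (1 - z₀ * θ) ≤ ε / 2 := by
    have hXnn : (0:ℝ) ≤ (z₀ * θ) ^ N := Real.rpow_nonneg (le_of_lt hzθ0) N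
    have hden : 1 - ε - θ ≤ 1 - z₀ * θ := by linarith
    have key : (K / θ) * (z₀ * θ) ^ N / (1 - z₀ * θ) ≤ (K / θ) * (c / (2 * K)) / (1 - ε - θ) := by
      apply div_le_div₀ (by positivity) _ hεθ' hden
      exact mul_le_mul_of_nonneg_left (le_of_lt hzθN) (by positivity)
    have heq : (K / θ) * (c / (2 * K)) / (1 - ε - θ) = ε / 2 := by
      rw [hc]; field_simp
    linarith [key, heq ▸ key]
  linarith
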